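/- Let L ⊆ ℝ^d be a full-rank lattice. Then L admits a covering of ℝ^d by translates of a rotated rectangular box of diameter at most √d · λ_d(L): there exist an orthogonal transformation K ∈ O(d) and positive real numbers a₁, …, a_d with a₁² + ⋯ + a_d² ≤ d · λ_d(L)² such that the translates x + K([0,a₁] × ⋯ × [0,a_d]), for x ranging over L, cover all of ℝ^d. -/

import Mathlib

/-- The Euclidean (`L²`) norm of a vector. -/
noncomputable def euclNorm {ι : Type*} [Fintype ι] (x : ι → ℝ) : ℝ :=
  Real.sqrt (∑ i, x i ^ 2)

/-- The `i`-th successive minimum of a lattice `L ⊆ ℝ^ι`: the least `r > 0` such that `L`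
contains `i` linearly independent vectors of Euclidean norm at most `r`. -/
noncomputable def succMin {ι : Type*} [Fintype ι] (L : Submodule ℤ (ι → ℝ)) (i : ℕ) : ℝ :=
  sInf {r : ℝ | 0 < r ∧ ∃ v : Fin i → (ι → ℝ), (∀ j, v j ∈ L) ∧
    LinearIndependent ℝ v ∧ ∀ j, euclNorm (v j) ≤ r}

open scoped RealInnerProductSpace
open InnerProductSpace

instance finWF (d : ℕ) : WellFoundedLT (Fin d) := inferInstance

lemma euclNorm_eq {d : ℕ} (x : EuclideanSpace ℝ (Fin d)) : euclNorm x = ‖x‖ := by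
  rw [EuclideanSpace.norm_eq, euclNorm]
  congr 1
  exact Finset.sum_congr rfl fun i _ => by rw [Real.norm_eq_abs, sq_abs]

lemma abs_coord_le_euclNorm {d : ℕ} (x : Fin d → ℝ) (i : Fin d) : |x i| ≤ euclNorm x := by
  rw [euclNorm, ← Real.sqrt_sq_eq_abs]
  apply Real.sqrt_le_sqrt
  exact Finset.single_le_sum (fun j _ => sq_nonneg (x j)) (Finset.mem_univ i)

lemma euclNorm_pos {d : ℕ} {x : Fin d → ℝ} (hx : x ≠ 0) : 0 < euclNorm x := by
  have h : (WithLp.toLp 2 x : EuclideanSpace ℝ (Fin d)) ≠ 0 := fun h0 => hx (congrArg WithLp.ofLp h0)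
  show 0 < euclNorm (WithLp.toLp 2 x : EuclideanSpace ℝ (Fin d)).ofLp
  rw [euclNorm_eq]
  exact norm_pos_iff.mpr h

lemma pi_sum_apply {d m : ℕ} (g : Fin m → EuclideanSpace ℝ (Fin d)) (i : Fin d) :
    (∑ j, g j) i = ∑ j, g j i :=
  by rw [WithLp.ofLp_sum]; exact Finset.sum_apply i Finset.univ _

lemma norm_gramSchmidt_le {E : Type*} [NormedAddCommGroup E] [InnerProductSpace ℝ E]
    {d : ℕ} (f : Fin d → E) (n : Fin d) : ‖gramSchmidt ℝ f n‖ ≤ ‖f n‖ := by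
  have h := gramSchmidt_def' ℝ f n
  set u := gramSchmidt ℝ f n with hu
  set w : E :=
    (∑ i ∈ Finset.Iio n, (ℝ ∙ gramSchmidt ℝ f i).starProjection (f n)) with hw
  have hinner : inner ℝ u w = 0 := by
    rw [hw, inner_sum]
    refine Finset.sum_eq_zero fun i hi => ?_
    have hmem := (ℝ ∙ gramSchmidt ℝ f i).starProjection_apply_mem (f n)
    obtain ⟨c, hc⟩ := Submodule.mem_span_singleton.mp hmem
    rw [← hc, real_inner_smul_right,
      gramSchmidt_orthogonal ℝ f (Finset.mem_Iio.mp hi).ne', mul_zero]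
  have hsq : ‖f n‖ ^ 2 = ‖u‖ ^ 2 + ‖w‖ ^ 2 := by
    rw [h, norm_add_sq_real, hinner]; ring
  nlinarith [norm_nonneg u, norm_nonneg (f n), norm_nonneg w]

lemma round_lemma {d : ℕ} (M : Fin d → Fin d → ℝ) (hM : ∀ i, M i i = 1)
    (hM' : ∀ i j : Fin d, (i : ℕ) < (j : ℕ) → M i j = 0) (s : Fin d → ℝ) :
    ∃ k : Fin d → ℤ, ∀ j, s j - ∑ i, (k i : ℝ) * M i j ∈ Set.Ico (0 : ℝ) 1 := by
  suffices h : ∀ n : ℕ, ∃ k : Fin d → ℤ, (∀ i : Fin d, (i : ℕ) + n < d → k i = 0) ∧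
      ∀ j : Fin d, d ≤ (j : ℕ) + n → s j - ∑ i, (k i : ℝ) * M i j ∈ Set.Ico (0 : ℝ) 1 by
    obtain ⟨k, _, hk⟩ := h d
    exact ⟨k, fun j => hk j (by omega)⟩
  intro n
  induction n with
  | zero =>
    exact ⟨0, fun i _ => rfl, fun j hj => absurd j.2 (by omega)⟩
  | succ n ih =>
    obtain ⟨k, hk0, hk⟩ := ih
    by_cases hnd : n < d
    · set j₀ : Fin d := ⟨d - 1 - n, by omega⟩ with hj₀
      set c := s j₀ - ∑ i, (k i : ℝ) * M i j₀ with hc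
      have hkj₀ : k j₀ = 0 := hk0 j₀ (by simp only [hj₀]; omega)
      have hsum : ∀ j' : Fin d, (∑ i, ((Function.update k j₀ ⌊c⌋ i : ℤ) : ℝ) * M i j')
          = (∑ i, (k i : ℝ) * M i j') + (⌊c⌋ : ℝ) * M j₀ j' := by
        intro j'
        rw [← Finset.add_sum_erase _ _ (Finset.mem_univ j₀),
          ← Finset.add_sum_erase _ (fun i => (k i : ℝ) * M i j') (Finset.mem_univ j₀),
          Function.update_self, hkj₀]
        rw [Finset.sum_congr rfl fun i hi => by
          rw [Function.update_of_ne (Finset.ne_of_mem_erase hi)]]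
        push_cast
        ring
      refine ⟨Function.update k j₀ ⌊c⌋, ?_, ?_⟩
      · intro i hi
        have hij : i ≠ j₀ := by
          intro h
          rw [h] at hi
          simp only [hj₀] at hi
          omega
        rw [Function.update_of_ne hij]
        exact hk0 i (by omega)
      · intro j hj
        rw [hsum]
        by_cases hcase : d ≤ (j : ℕ) + n
        · have h0 : M j₀ j = 0 := hM' j₀ j (by simp only [hj₀]; omega)
          rw [h0, mul_zero, add_zero]
          exact hk j hcase
        · have hjj : j = j₀ := by
            apply Fin.ext
            simp only [hj₀]
            omega
          rw [hjj, hM j₀]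
          have h1 := Int.fract_nonneg c
          have h2 := Int.fract_lt_one c
          rw [Int.fract] at h1 h2
          refine Set.mem_Ico.mpr ⟨?_, ?_⟩
          · linarith [hc.ge, hc.le]
          · linarith [hc.ge, hc.le]
    · exact ⟨k, fun i hi => hk0 i (by omega), fun j hj => hk j (by omega)⟩

lemma exists_min_vectors {d : ℕ} (hd : 0 < d) (b : Fin d → (Fin d → ℝ))
    (hb : LinearIndependent ℝ b) (L : Submodule ℤ (Fin d → ℝ))
    (hL : L = Submodule.span ℤ (Set.range b)) :
    ∃ v : Fin d → (Fin d → ℝ), (∀ j, v j ∈ L) ∧ LinearIndependent ℝ v ∧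
      ∀ j, euclNorm (v j) ≤ succMin L d := by
  classical
  haveI : Nonempty (Fin d) := ⟨⟨0, hd⟩⟩
  have hne : (Finset.univ : Finset (Fin d)).Nonempty := Finset.univ_nonempty
  have hcard : Fintype.card (Fin d) = Module.finrank ℝ (Fin d → ℝ) := by
    simp [Module.finrank_fin_fun]
  have hb' := coe_basisOfLinearIndependentOfCardEqFinrank hb hcard
  haveI hdisc : DiscreteTopology L := by
    rw [hL, ← hb']
    infer_instance
  haveI hdisc' : DiscreteTopology L.toAddSubgroup := hdisc
  have hclosed : IsClosed (L : Set (Fin d → ℝ)) :=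
    AddSubgroup.isClosed_of_discrete (H := L.toAddSubgroup)
  -- distinguished radius
  set r₀ : ℝ := Finset.univ.sup' hne (fun j => euclNorm (b j)) with hr₀
  have hbL : ∀ j, b j ∈ L := fun j => by rw [hL]; exact Submodule.subset_span ⟨j, rfl⟩
  have hbne : ∀ j : Fin d, b j ≠ 0 := fun j => hb.ne_zero j
  have hr₀pos : 0 < r₀ := lt_of_lt_of_le (euclNorm_pos (hbne ⟨0, hd⟩))
    (Finset.le_sup' (fun j => euclNorm (b j)) (Finset.mem_univ (⟨0, hd⟩ : Fin d)))
  -- the set S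
  set S : Set ℝ := {r : ℝ | 0 < r ∧ ∃ v : Fin d → (Fin d → ℝ), (∀ j, v j ∈ L) ∧
    LinearIndependent ℝ v ∧ ∀ j, euclNorm (v j) ≤ r} with hS
  have hsuccMin : succMin L d = sInf S := rfl
  have hr₀S : r₀ ∈ S := ⟨hr₀pos, b, hbL, hb, fun j => Finset.le_sup' (fun j => euclNorm (b j)) (Finset.mem_univ j)⟩
  -- finiteness
  have hGfin : Set.Finite ((L : Set (Fin d → ℝ)) ∩ Metric.closedBall 0 r₀) := by
    have hcomp : IsCompact ((L : Set (Fin d → ℝ)) ∩ Metric.closedBall 0 r₀) :=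
      IsCompact.of_isClosed_subset (isCompact_closedBall 0 r₀)
        (hclosed.inter Metric.isClosed_closedBall) Set.inter_subset_right
    exact hcomp.finite ⟨DiscreteTopology.of_subset hdisc Set.inter_subset_left⟩
  have hFfin : Set.Finite {x : Fin d → ℝ | x ∈ L ∧ euclNorm x ≤ r₀} := by
    refine hGfin.subset fun x hx => ⟨hx.1, ?_⟩
    rw [Metric.mem_closedBall, dist_zero_right]
    refine (pi_norm_le_iff_of_nonneg hr₀pos.le).mpr fun i => ?_
    exact le_trans (abs_coord_le_euclNorm x i) hx.2
  -- finite set of candidate tuples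
  set T : Set (Fin d → (Fin d → ℝ)) :=
    {v | (∀ j, v j ∈ {x : Fin d → ℝ | x ∈ L ∧ euclNorm x ≤ r₀}) ∧ LinearIndependent ℝ v}
    with hT
  have hTfin : T.Finite := by
    refine Set.Finite.subset (Set.Finite.pi (fun _ => hFfin)) fun v hv => ?_
    exact Set.mem_pi.mpr fun j _ => hv.1 j
  have hTne : T.Nonempty :=
    ⟨b, fun j => ⟨hbL j, Finset.le_sup' (fun j => euclNorm (b j)) (Finset.mem_univ j)⟩, hb⟩
  obtain ⟨v, hvT, hvmin⟩ := Set.exists_min_image T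
    (fun v => Finset.univ.sup' hne (fun j => euclNorm (v j))) hTfin hTne
  set m : ℝ := Finset.univ.sup' hne (fun j => euclNorm (v j)) with hm
  -- m is a lower bound for S
  have hlb : ∀ r ∈ S, m ≤ r := by
    rintro r ⟨hrpos, w, hwL, hwli, hwnorm⟩
    by_cases hr : r ≤ r₀
    · have hwT : w ∈ T := ⟨fun j => ⟨hwL j, le_trans (hwnorm j) hr⟩, hwli⟩
      exact le_trans (hvmin w hwT) (Finset.sup'_le hne (fun j => euclNorm (w j)) fun j _ => hwnorm j)
    · calc m ≤ r₀ := le_trans (hvmin b (by exact ⟨fun j => ⟨hbL j,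
          Finset.le_sup' (fun j => euclNorm (b j)) (Finset.mem_univ j)⟩, hb⟩)) le_rfl
        _ ≤ r := le_of_not_ge hr
  have hmle : m ≤ sInf S := le_csInf ⟨r₀, hr₀S⟩ hlb
  refine ⟨v, fun j => (hvT.1 j).1, hvT.2, fun j => ?_⟩
  rw [hsuccMin]
  exact le_trans (Finset.le_sup' (fun j => euclNorm (v j)) (Finset.mem_univ j)) hmle

/-- **Lemma 2.3.** Every full-rank lattice `L ⊆ ℝ^d` admits a covering of `ℝ^d` by its
translates of a rotated rectangular box of diameter at most `√d · λ_d(L)`: there are an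
orthogonal matrix `K` and positive reals `a₁, …, a_d` with `a₁² + ⋯ + a_d² ≤ d λ_d(L)²` such
that the sets `x + K([0,a₁] × ⋯ × [0,a_d])`, `x ∈ L`, cover `ℝ^d`. -/
theorem lattice_box_covering (d : ℕ) (b : Fin d → (Fin d → ℝ)) (hb : LinearIndependent ℝ b)
    (L : Submodule ℤ (Fin d → ℝ)) (hL : L = Submodule.span ℤ (Set.range b)) :
    ∃ K : Matrix (Fin d) (Fin d) ℝ, K.transpose * K = 1 ∧
      ∃ a : Fin d → ℝ, (∀ i, 0 < a i) ∧ (∑ i, a i ^ 2) ≤ d * succMin L d ^ 2 ∧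
        ∀ z : Fin d → ℝ, ∃ x ∈ L, ∃ y : Fin d → ℝ,
          (∀ i, y i ∈ Set.Icc (0 : ℝ) (a i)) ∧ z = x + K.mulVec y := by
  classical
  rcases Nat.eq_zero_or_pos d with hd | hd
  · subst hd
    refine ⟨1, by simp, fun i => i.elim0, fun i => i.elim0, by simp, fun z => ?_⟩
    exact ⟨0, L.zero_mem, fun i => i.elim0, fun i => i.elim0,
      funext fun i => i.elim0⟩
  · obtain ⟨v, hvL, hvli, hvnorm⟩ := exists_min_vectors hd b hb L hL
    set lam : ℝ := succMin L d with hlam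
    -- Euclidean space view
    let f : Fin d → EuclideanSpace ℝ (Fin d) := fun j => WithLp.toLp 2 (v j)
    have hfli : LinearIndependent ℝ f :=
      hvli.map' (WithLp.linearEquiv 2 ℝ (Fin d → ℝ)).symm.toLinearMap (LinearEquiv.ker _)
    set u : Fin d → EuclideanSpace ℝ (Fin d) := fun j => gramSchmidt ℝ f j with hu
    have hu0 : ∀ j, u j ≠ 0 := fun j => gramSchmidt_ne_zero j hfli
    have hunorm : ∀ j, 0 < ‖u j‖ := fun j => norm_pos_iff.mpr (hu0 j)
    have hOrth : ∀ j j' : Fin d, j ≠ j' → inner ℝ (u j) (u j') = 0 :=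
      fun j j' h => gramSchmidt_orthogonal ℝ f h
    have hnorm_le : ∀ j, ‖u j‖ ≤ ‖f j‖ := fun j => norm_gramSchmidt_le f j
    have hflam : ∀ j, ‖f j‖ ≤ lam := fun j => by
      rw [← euclNorm_eq (f j)]; exact hvnorm j
    -- inner products as sums
    have hinner_sum : ∀ x y : EuclideanSpace ℝ (Fin d),
        inner ℝ x y = ∑ i, x i * y i := fun x y => by
      simp [PiLp.inner_apply, RCLike.inner_apply, starRingEnd_apply, mul_comm]
    -- u spans
    haveI : Nonempty (Fin d) := ⟨⟨0, hd⟩⟩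
    have hcardE : Fintype.card (Fin d) = Module.finrank ℝ (EuclideanSpace ℝ (Fin d)) := by
      simp
    have hspan : ⊤ ≤ Submodule.span ℝ (Set.range u) := by
      rw [hu]
      rw [span_gramSchmidt ℝ f, ← coe_basisOfLinearIndependentOfCardEqFinrank hfli hcardE,
        (basisOfLinearIndependentOfCardEqFinrank hfli hcardE).span_eq]
    set B : Module.Basis (Fin d) ℝ (EuclideanSpace ℝ (Fin d)) :=
      Module.Basis.mk (gramSchmidt_linearIndependent hfli) hspan with hB
    have hBu : ∀ j, B j = u j := fun j => by rw [hB, Module.Basis.mk_apply, hu]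
    -- the triangular matrix M
    set M : Fin d → Fin d → ℝ := fun i j =>
      if j = i then 1 else if (j : ℕ) < (i : ℕ) then inner ℝ (u j) (f i) / ‖u j‖ ^ 2 else 0
      with hM
    have hM1 : ∀ i, M i i = 1 := fun i => if_pos rfl
    have hM0 : ∀ i j : Fin d, (i : ℕ) < (j : ℕ) → M i j = 0 := fun i j h => by
      simp only [hM]
      rw [if_neg (by intro hji; rw [hji] at h; omega), if_neg (by omega)]
    have hMrepr : ∀ i, f i = ∑ j, M i j • u j := by
      intro i
      have h1 : ∑ j, M i j • u j = ∑ j ∈ Finset.Iic i, M i j • u j := by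
        refine (Finset.sum_subset (Finset.subset_univ _) fun j _ hj => ?_).symm
        have hij : (i : ℕ) < (j : ℕ) := by
          rcases lt_or_ge (i : ℕ) (j : ℕ) with h | h
          · exact h
          · exact absurd (Finset.mem_Iic.mpr (Fin.le_def.mpr h)) hj
        rw [hM0 i j hij, zero_smul]
      have h3 : ∀ j ∈ Finset.Iio i, M i j • u j =
          (inner ℝ (u j) (f i) / ‖u j‖ ^ 2) • u j := by
        intro j hj
        have hlt : (j : ℕ) < (i : ℕ) := Fin.lt_def.mp (Finset.mem_Iio.mp hj)
        have hne : j ≠ i := by intro h; rw [h] at hlt; omega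
        have : M i j = inner ℝ (u j) (f i) / ‖u j‖ ^ 2 := by
          simp only [hM]
          rw [if_neg hne, if_pos hlt]
        rw [this]
      rw [h1, ← Finset.Iio_insert, Finset.sum_insert (by simp), hM1 i, one_smul,
        Finset.sum_congr rfl h3]
      exact_mod_cast gramSchmidt_def'' ℝ f i
    -- the orthogonal matrix and side lengths
    set Kmat : Matrix (Fin d) (Fin d) ℝ := Matrix.of fun i0 j => u j i0 / ‖u j‖ with hKmat
    have hKapp : ∀ i0 j, Kmat i0 j = u j i0 / ‖u j‖ := fun i0 j => rfl
    refine ⟨Kmat, ?_, fun j => ‖u j‖, hunorm, ?_, ?_⟩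
    · ext j j'
      rw [Matrix.mul_apply, Matrix.one_apply]
      simp only [Matrix.transpose_apply, hKapp]
      have hsum : ∑ i0, (u j i0 / ‖u j‖) * (u j' i0 / ‖u j'‖)
          = inner ℝ (u j) (u j') / (‖u j‖ * ‖u j'‖) := by
        rw [hinner_sum, Finset.sum_div]
        exact Finset.sum_congr rfl fun i0 _ => (div_mul_div_comm _ _ _ _)
      rw [hsum]
      by_cases h : j = j'
      · subst h
        rw [if_pos rfl, real_inner_self_eq_norm_sq, sq,
          div_self (mul_ne_zero (hunorm j).ne' (hunorm j).ne')]
      · rw [if_neg h, hOrth j j' h, zero_div]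
    · have hbound : ∀ j : Fin d, ‖u j‖ ^ 2 ≤ lam ^ 2 := fun j => by
        have h := le_trans (hnorm_le j) (hflam j)
        nlinarith [norm_nonneg (u j)]
      calc (∑ j, ‖u j‖ ^ 2) ≤ ∑ _j : Fin d, lam ^ 2 :=
            Finset.sum_le_sum fun j _ => hbound j
        _ = d * lam ^ 2 := by
            rw [Finset.sum_const, Finset.card_univ, Fintype.card_fin, nsmul_eq_mul]
    · intro z
      set zE : EuclideanSpace ℝ (Fin d) := WithLp.toLp 2 z with hzE
      set s : Fin d → ℝ := fun j => B.repr zE j with hs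
      have hz : zE = ∑ j, s j • u j := by
        conv_lhs => rw [← B.sum_repr zE]
        exact Finset.sum_congr rfl fun j _ => by rw [hBu j]
      obtain ⟨k, hk⟩ := round_lemma M hM1 hM0 s
      set c : Fin d → ℝ := fun j => s j - ∑ i0, (k i0 : ℝ) * M i0 j with hcdef
      have hc0 : ∀ j, 0 ≤ c j := fun j => (hk j).1
      have hc1 : ∀ j, c j < 1 := fun j => (hk j).2
      have hxL : WithLp.ofLp (∑ i0, (k i0 : ℝ) • f i0 : EuclideanSpace ℝ (Fin d)) ∈ L := by
        have h : (∑ i0, (k i0 : ℝ) • v i0 : Fin d → ℝ) ∈ L := by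
          refine Submodule.sum_mem L fun i0 _ => ?_
          rw [Int.cast_smul_eq_zsmul]
          exact L.smul_mem (k i0) (hvL i0)
        rw [WithLp.ofLp_sum]; exact h
      refine ⟨WithLp.ofLp (∑ i0, (k i0 : ℝ) • f i0 : EuclideanSpace ℝ (Fin d)), hxL,
        fun j => c j * ‖u j‖, fun j => ⟨mul_nonneg (hc0 j) (norm_nonneg _), ?_⟩, ?_⟩
      · calc c j * ‖u j‖ ≤ 1 * ‖u j‖ :=
              mul_le_mul_of_nonneg_right (hc1 j).le (norm_nonneg _)
          _ = ‖u j‖ := one_mul _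
      · have hxE : (∑ i0, (k i0 : ℝ) • f i0 : EuclideanSpace ℝ (Fin d))
            = ∑ j, (∑ i0, (k i0 : ℝ) * M i0 j) • u j := by
          rw [Finset.sum_congr rfl fun i0 _ => by rw [hMrepr i0, Finset.smul_sum]]
          rw [Finset.sum_comm]
          exact Finset.sum_congr rfl fun j _ =>
            (Finset.sum_congr rfl fun i0 _ => smul_smul _ _ _).trans
              (Finset.sum_smul).symm
        have hdiff : zE - (∑ i0, (k i0 : ℝ) • f i0 : EuclideanSpace ℝ (Fin d))
            = ∑ j, c j • u j := by
          rw [hz, hxE, ← Finset.sum_sub_distrib]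
          exact Finset.sum_congr rfl fun j _ => (sub_smul _ _ _).symm
        funext i0
        have h1 : (zE - (∑ i0', (k i0' : ℝ) • f i0' : EuclideanSpace ℝ (Fin d))) i0
            = (∑ j, c j • u j) i0 := by rw [hdiff]
        have h2 : (∑ j, c j • u j) i0 = ∑ j, c j * u j i0 := by
          rw [pi_sum_apply]
          exact Finset.sum_congr rfl fun j _ => rfl
        rw [h2] at h1
        have h3 : zE i0 - (∑ i0', (k i0' : ℝ) • f i0' : EuclideanSpace ℝ (Fin d)) i0
            = z i0 - (∑ i0', (k i0' : ℝ) • f i0' : EuclideanSpace ℝ (Fin d)) i0 := rfl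
        have hKy : ∀ i1 : Fin d,
            (Kmat.mulVec (fun j => c j * ‖u j‖)) i1 = ∑ j, c j * u j i1 := by
          intro i1
          simp only [Matrix.mulVec, dotProduct, hKapp]
          exact Finset.sum_congr rfl fun j _ => by
            have hr : u j i1 / ‖u j‖ * (c j * ‖u j‖) = c j * u j i1 * (‖u j‖ / ‖u j‖) := by
              ring
            rw [hr, div_self (hunorm j).ne', mul_one]
        show z i0 = (∑ i0', (k i0' : ℝ) • f i0' : EuclideanSpace ℝ (Fin d)) i0
          + (Kmat.mulVec (fun j => c j * ‖u j‖)) i0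
        rw [hKy i0]
        have h4 : (zE - (∑ i0', (k i0' : ℝ) • f i0' : EuclideanSpace ℝ (Fin d))) i0
            = zE i0 - (∑ i0', (k i0' : ℝ) • f i0' : EuclideanSpace ℝ (Fin d)) i0 := rfl
        rw [h4] at h1
        have h5 : zE i0 = z i0 := rfl
        rw [h5] at h1
        linarith [h1]
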